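/- Let D be a probability measure on α × Bool, Q a probability measure on Θ, and g : Θ × α → Bool a measurable classifier. Then 1 − AV(Q) ≥ R_D(Q)² + (1 − R_D(Q))². (Variance-decomposition inequality in the proof of Theorem 2: the expected agreement probability dominates R² + (1 − R)².) -/

import Mathlib

open MeasureTheory

lemma sq_integral_le_integral_sq {β : Type*} [MeasurableSpace β]
    (μ : Measure β) [IsProbabilityMeasure μ] (f : β → ℝ)
    (hf : Integrable f μ) (hf2 : Integrable (fun x => f x * f x) μ) :
    (∫ x, f x ∂μ) ^ 2 ≤ ∫ x, f x * f x ∂μ := by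
  set m := ∫ x, f x ∂μ with hm
  have h : 0 ≤ ∫ x, (f x - m) ^ 2 ∂μ := integral_nonneg (fun x => sq_nonneg _)
  have heq : ∫ x, (f x - m) ^ 2 ∂μ = (∫ x, f x * f x ∂μ) - m ^ 2 := by
    have hxeq : ∀ x, (f x - m) ^ 2 = (f x * f x - (2 * m) * f x) + m ^ 2 := by
      intro x; ring
    simp_rw [hxeq]
    have i1 : Integrable (fun x => f x * f x - (2 * m) * f x) μ := by
      exact hf2.sub (hf.const_mul _)
    have i2 : Integrable (fun x => (2 * m) * f x) μ := by exact hf.const_mul _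
    rw [integral_add i1 (integrable_const _),
      integral_sub hf2 i2, integral_const_mul, integral_const]
    simp [← hm]
    ring
  linarith [heq ▸ h]

/-- Variance-decomposition inequality in the proof of Theorem 2:
`1 − AV(Q) ≥ R_D(Q)² + (1 − R_D(Q))²`. -/
theorem one_sub_algorithm_db_variability_ge_binary
    {α Θ : Type*} [MeasurableSpace α] [MeasurableSpace Θ]
    (D : Measure (α × Bool)) [IsProbabilityMeasure D]
    (Q : Measure Θ) [IsProbabilityMeasure Q]
    (g : Θ × α → Bool) (hg : Measurable g) :
    1 - (∫ p, ∫ θ, ∫ θ',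
          (if g (θ, p.1) ≠ g (θ', p.1) then (1 : ℝ) else 0) ∂Q ∂Q ∂D) ≥
      (∫ p, ∫ θ, (if g (θ, p.1) ≠ p.2 then (1 : ℝ) else 0) ∂Q ∂D) ^ 2 +
        (1 - ∫ p, ∫ θ, (if g (θ, p.1) ≠ p.2 then (1 : ℝ) else 0) ∂Q ∂D) ^ 2 := by
  classical
  -- the pointwise disagreement-with-label indicator, as a function on the product
  have hbig : Measurable
      (fun q : (α × Bool) × Θ => if g (q.2, q.1.1) ≠ q.1.2 then (1 : ℝ) else 0) := by
    have hpair : Measurable (fun q : (α × Bool) × Θ => (g (q.2, q.1.1), q.1.2)) :=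
      (hg.comp (measurable_snd.prodMk measurable_fst.fst)).prodMk measurable_fst.snd
    have hset : MeasurableSet {q : (α × Bool) × Θ | g (q.2, q.1.1) ≠ q.1.2} :=
      hpair (Set.to_countable {b : Bool × Bool | b.1 ≠ b.2}).measurableSet
    exact Measurable.ite hset measurable_const measurable_const
  set f : α × Bool → ℝ :=
    fun p => ∫ θ, (if g (θ, p.1) ≠ p.2 then (1 : ℝ) else 0) ∂Q with hf_def
  have hAmeas : ∀ p : α × Bool,
      Measurable (fun θ => (if g (θ, p.1) ≠ p.2 then (1 : ℝ) else 0)) := by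
    intro p
    exact hbig.comp (measurable_const.prodMk measurable_id)
  have hAint : ∀ p : α × Bool,
      Integrable (fun θ => (if g (θ, p.1) ≠ p.2 then (1 : ℝ) else 0)) Q := by
    intro p
    refine (integrable_const (1 : ℝ)).mono' (hAmeas p).aestronglyMeasurable ?_
    filter_upwards with θ
    split <;> simp
  have hf_nonneg : ∀ p, 0 ≤ f p := by
    intro p
    exact integral_nonneg fun θ => by split <;> norm_num
  have hf_le_one : ∀ p, f p ≤ 1 := by
    intro p
    have h := integral_mono (hAint p) (integrable_const (1 : ℝ))
      (fun θ => by split <;> norm_num)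
    simp only [integral_const, measure_univ, ENNReal.toReal_one, probReal_univ, smul_eq_mul,
      mul_one, one_mul] at h
    exact h
  have hf_meas : Measurable f :=
    hbig.stronglyMeasurable.integral_prod_right'.measurable
  -- inner double integral equals `2 f p - 2 f p * f p`
  have key : ∀ p : α × Bool,
      (∫ θ, ∫ θ', (if g (θ, p.1) ≠ g (θ', p.1) then (1 : ℝ) else 0) ∂Q ∂Q)
        = 2 * f p - 2 * (f p * f p) := by
    intro p
    have hpt : ∀ θ θ' : Θ,
        (if g (θ, p.1) ≠ g (θ', p.1) then (1 : ℝ) else 0)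
          = ((if g (θ, p.1) ≠ p.2 then (1 : ℝ) else 0)
              + (if g (θ', p.1) ≠ p.2 then (1 : ℝ) else 0))
            - (2 * (if g (θ, p.1) ≠ p.2 then (1 : ℝ) else 0))
                * (if g (θ', p.1) ≠ p.2 then (1 : ℝ) else 0) := by
      intro θ θ'
      cases hb : g (θ, p.1) <;> cases hb' : g (θ', p.1) <;> cases hy : p.2 <;> norm_num
    have h1 : ∀ θ : Θ,
        (∫ θ', (if g (θ, p.1) ≠ g (θ', p.1) then (1 : ℝ) else 0) ∂Q)
          = (1 - 2 * f p) * (if g (θ, p.1) ≠ p.2 then (1 : ℝ) else 0) + f p := by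
      intro θ
      have : (∫ θ', (if g (θ, p.1) ≠ g (θ', p.1) then (1 : ℝ) else 0) ∂Q)
          = ∫ θ', (((if g (θ, p.1) ≠ p.2 then (1 : ℝ) else 0)
              + (if g (θ', p.1) ≠ p.2 then (1 : ℝ) else 0))
            - (2 * (if g (θ, p.1) ≠ p.2 then (1 : ℝ) else 0))
                * (if g (θ', p.1) ≠ p.2 then (1 : ℝ) else 0)) ∂Q := by
        exact integral_congr_ae (Filter.Eventually.of_forall fun θ' => hpt θ θ')
      have i1 : Integrable (fun θ' => (if g (θ, p.1) ≠ p.2 then (1 : ℝ) else 0)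
          + (if g (θ', p.1) ≠ p.2 then (1 : ℝ) else 0)) Q := by
        exact (integrable_const _).add (hAint p)
      have i2 : Integrable (fun θ' => (2 * (if g (θ, p.1) ≠ p.2 then (1 : ℝ) else 0))
          * (if g (θ', p.1) ≠ p.2 then (1 : ℝ) else 0)) Q := by
        exact (hAint p).const_mul _
      rw [this, integral_sub i1 i2,
        integral_add (integrable_const _) (hAint p), integral_const,
        integral_const_mul]
      simp only [measure_univ, ENNReal.toReal_one, probReal_univ, smul_eq_mul, one_mul, ← hf_def]
      ring
    simp_rw [h1]
    have i3 : Integrable (fun θ => (1 - 2 * f p)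
        * (if g (θ, p.1) ≠ p.2 then (1 : ℝ) else 0)) Q := by
      exact (hAint p).const_mul _
    rw [integral_add i3 (integrable_const _), integral_const_mul, integral_const]
    simp only [measure_univ, ENNReal.toReal_one, probReal_univ, smul_eq_mul, one_mul, ← hf_def]
    ring
  -- integrability over D
  have hfD : Integrable f D := by
    refine (integrable_const (1 : ℝ)).mono' hf_meas.aestronglyMeasurable ?_
    filter_upwards with p
    rw [Real.norm_eq_abs, abs_of_nonneg (hf_nonneg p)]
    exact hf_le_one p
  have hffD : Integrable (fun p => f p * f p) D := by
    refine (integrable_const (1 : ℝ)).mono'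
      (hf_meas.mul hf_meas).aestronglyMeasurable ?_
    filter_upwards with p
    rw [Real.norm_eq_abs, abs_of_nonneg (mul_nonneg (hf_nonneg p) (hf_nonneg p))]
    exact mul_le_one₀ (hf_le_one p) (hf_nonneg p) (hf_le_one p)
  have hAV : (∫ p, ∫ θ, ∫ θ',
      (if g (θ, p.1) ≠ g (θ', p.1) then (1 : ℝ) else 0) ∂Q ∂Q ∂D)
        = 2 * (∫ p, f p ∂D) - 2 * ∫ p, f p * f p ∂D := by
    have i4 : Integrable (fun p => 2 * f p) D := by exact hfD.const_mul _
    have i5 : Integrable (fun p => 2 * (f p * f p)) D := by exact hffD.const_mul _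
    rw [integral_congr_ae (Filter.Eventually.of_forall key),
      integral_sub i4 i5, integral_const_mul, integral_const_mul]
  have hCS : (∫ p, f p ∂D) ^ 2 ≤ ∫ p, f p * f p ∂D :=
    sq_integral_le_integral_sq D f hfD hffD
  rw [hAV]
  set m := ∫ p, f p ∂D
  nlinarith [hCS]
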